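/- Let p_A and p_C be probability measures on ℝ with continuous strictly positive densities, and let f : ℝ × B → ℝ be differentiable, where B = ℝⁿ, such that for every b ∈ B the map f(·, b) : ℝ → ℝ pushes p_A forward to p_C. Then f is constant in its second argument: f(a, b) = f(a, b') for all a ∈ ℝ and b, b' ∈ B. -/

import Mathlib

open MeasureTheory Set

lemma aux_lower {ρ : ℝ → ℝ} (hρ : Continuous ρ) {m a b : ℝ} (hm0 : 0 ≤ m)
    (h : ∀ x ∈ Icc a b, m ≤ ρ x) :
    ENNReal.ofReal (m * (b - a)) ≤
      (volume.withDensity fun x => ENNReal.ofReal (ρ x)) (Icc a b) := by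
  rw [withDensity_apply _ measurableSet_Icc]
  calc ENNReal.ofReal (m * (b - a)) = ENNReal.ofReal m * volume (Icc a b) := by
        rw [Real.volume_Icc, ENNReal.ofReal_mul hm0]
    _ = ∫⁻ _ in Icc a b, ENNReal.ofReal m := by rw [setLIntegral_const]
    _ ≤ ∫⁻ x in Icc a b, ENNReal.ofReal (ρ x) := by
        refine setLIntegral_mono (ENNReal.measurable_ofReal.comp hρ.measurable) ?_
        exact fun x hx => ENNReal.ofReal_le_ofReal (h x hx)

lemma aux_upper {ρ : ℝ → ℝ} {M a b : ℝ} (hM0 : 0 ≤ M)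
    (h : ∀ x ∈ Icc a b, ρ x ≤ M) :
    (volume.withDensity fun x => ENNReal.ofReal (ρ x)) (Icc a b) ≤
      ENNReal.ofReal (M * (b - a)) := by
  rw [withDensity_apply _ measurableSet_Icc]
  calc ∫⁻ x in Icc a b, ENNReal.ofReal (ρ x) ≤ ∫⁻ _ in Icc a b, ENNReal.ofReal M := by
        refine setLIntegral_mono measurable_const ?_
        exact fun x hx => ENNReal.ofReal_le_ofReal (h x hx)
    _ = ENNReal.ofReal M * volume (Icc a b) := by rw [setLIntegral_const]
    _ = ENNReal.ofReal (M * (b - a)) := by rw [Real.volume_Icc, ENNReal.ofReal_mul hM0]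

/-- positivity of such measures on `Ioc` intervals -/
lemma aux_pos {ρ : ℝ → ℝ} (hρ : Continuous ρ) (hpos : ∀ x, 0 < ρ x) {a b : ℝ} (hab : a < b) :
    0 < (volume.withDensity fun x => ENNReal.ofReal (ρ x)) (Ioc a b) := by
  set c := (a + b) / 2 with hc
  have hac : a < c := by simp [hc]; linarith
  have hcb : c ≤ b := by simp [hc]; linarith
  obtain ⟨x0, hx0, hmin⟩ := isCompact_Icc.exists_isMinOn (nonempty_Icc.2 hcb)
    (hρ.continuousOn (s := Icc c b))
  have hm : 0 < ρ x0 := hpos x0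
  have hsub : Icc c b ⊆ Ioc a b := fun x hx => ⟨lt_of_lt_of_le hac hx.1, hx.2⟩
  have h1 : ENNReal.ofReal (ρ x0 * (b - c)) ≤
      (volume.withDensity fun x => ENNReal.ofReal (ρ x)) (Icc c b) :=
    aux_lower hρ hm.le (fun x hx => hmin hx)
  have hbc : 0 < b - c := by simp [hc]; linarith
  calc (0 : ENNReal) < ENNReal.ofReal (ρ x0 * (b - c)) := ENNReal.ofReal_pos.2 (by positivity)
    _ ≤ _ := h1.trans (measure_mono hsub)

theorem stmt_3 (n : ℕ) (ρA ρC : ℝ → ℝ)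
    (hρAc : Continuous ρA) (hρApos : ∀ x, 0 < ρA x)
    (hρCc : Continuous ρC) (hρCpos : ∀ x, 0 < ρC x)
    (pA pC : Measure ℝ)
    (hpA : pA = volume.withDensity fun x => ENNReal.ofReal (ρA x))
    (hpC : pC = volume.withDensity fun x => ENNReal.ofReal (ρC x))
    (hApr : IsProbabilityMeasure pA) (hCpr : IsProbabilityMeasure pC)
    (f : ℝ × (Fin n → ℝ) → ℝ) (hf : Differentiable ℝ f)
    (hmp : ∀ b : Fin n → ℝ, MeasurePreserving (fun a => f (a, b)) pA pC) :
    ∀ (a : ℝ) (b b' : Fin n → ℝ), f (a, b) = f (a, b') := by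
  -- strict monotonicity of CDFs
  have hFC : StrictMono (fun t => pC (Iic t)) := by
    intro t1 t2 h
    have hsplit : Iic t1 ∪ Ioc t1 t2 = Iic t2 := Iic_union_Ioc_eq_Iic h.le
    have hdisj : Disjoint (Iic t1) (Ioc t1 t2) := Iic_disjoint_Ioc le_rfl
    have : pC (Iic t2) = pC (Iic t1) + pC (Ioc t1 t2) := by
      rw [← hsplit, measure_union hdisj measurableSet_Ioc]
    simp only []
    rw [this]
    have hpos : 0 < pC (Ioc t1 t2) := hpC ▸ aux_pos hρCc hρCpos h
    exact ENNReal.lt_add_right (measure_ne_top _ _) hpos.ne'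
  have hFA : StrictMono (fun t => pA (Iic t)) := by
    intro t1 t2 h
    have hsplit : Iic t1 ∪ Ioc t1 t2 = Iic t2 := Iic_union_Ioc_eq_Iic h.le
    have hdisj : Disjoint (Iic t1) (Ioc t1 t2) := Iic_disjoint_Ioc le_rfl
    have : pA (Iic t2) = pA (Iic t1) + pA (Ioc t1 t2) := by
      rw [← hsplit, measure_union hdisj measurableSet_Ioc]
    simp only []
    rw [this]
    have hpos : 0 < pA (Ioc t1 t2) := hpA ▸ aux_pos hρAc hρApos h
    exact ENNReal.lt_add_right (measure_ne_top _ _) hpos.ne'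
  -- no atoms
  have hatomA : ∀ t : ℝ, pA {t} = 0 := by
    intro t
    rw [hpA, withDensity_apply _ (measurableSet_singleton t),
      Measure.restrict_eq_zero.2 (Real.volume_singleton), lintegral_zero_measure]
  -- the sections, their derivatives
  set g : (Fin n → ℝ) → ℝ → ℝ := fun b a => f (a, b) with hg_def
  have hgd : ∀ b x, HasDerivAt (g b) (fderiv ℝ f (x, b) (1, 0)) x := by
    intro b x
    exact (hf (x, b)).hasFDerivAt.comp_hasDerivAt x
      (HasDerivAt.prodMk (hasDerivAt_id x) (hasDerivAt_const x b))
  -- nonvanishing derivative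
  have hne : ∀ b x, fderiv ℝ f (x, b) (1, 0) ≠ 0 := by
    intro b x0 h0
    have hd : HasDerivAt (g b) 0 x0 := h0 ▸ hgd b x0
    -- min of ρA near x0
    obtain ⟨xm, hxm, hminA⟩ := isCompact_Icc.exists_isMinOn
      (nonempty_Icc.2 (by linarith : x0 - 1 ≤ x0 + 1)) (hρAc.continuousOn (s := Icc (x0-1) (x0+1)))
    set m := ρA xm with hm_def
    have hm : 0 < m := hρApos xm
    -- max of ρC near g b x0
    set y0 := g b x0 with hy0
    obtain ⟨xM, hxM, hmaxC⟩ := isCompact_Icc.exists_isMaxOn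
      (nonempty_Icc.2 (by linarith : y0 - 1 ≤ y0 + 1)) (hρCc.continuousOn (s := Icc (y0-1) (y0+1)))
    set M := ρC xM with hM_def
    have hM : 0 < M := hρCpos xM
    -- key estimate
    have key : ∀ ε : ℝ, 0 < ε → ε ≤ 1 → m ≤ M * ε := by
      intro ε hε hε1
      have hlo := (hasDerivAt_iff_isLittleO.1 hd).def hε
      simp only [smul_zero, sub_zero] at hlo
      rw [Metric.eventually_nhds_iff] at hlo
      obtain ⟨δ₀, hδ₀, hδprop⟩ := hlo
      set δ := min (δ₀ / 2) 1 with hδ_def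
      have hδpos : 0 < δ := lt_min (by linarith) one_pos
      have hδ1 : δ ≤ 1 := min_le_right _ _
      have hδlt : ∀ x : ℝ, x ∈ Icc (x0 - δ) (x0 + δ) → dist x x0 < δ₀ := by
        intro x hx
        rw [Real.dist_eq, abs_lt]
        have h1 : δ ≤ δ₀ / 2 := min_le_left _ _
        constructor <;> [linarith [hx.1]; linarith [hx.2]]
      have hsub : Icc (x0 - δ) (x0 + δ) ⊆ (g b) ⁻¹' Icc (y0 - ε * δ) (y0 + ε * δ) := by
        intro x hx
        have := hδprop (hδlt x hx)
        simp only [Real.norm_eq_abs] at this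
        have habs : |x - x0| ≤ δ := by
          rw [abs_le]; constructor <;> [linarith [hx.1]; linarith [hx.2]]
        have h2 : |g b x - y0| ≤ ε * δ :=
          le_trans this (by nlinarith [abs_nonneg (x - x0)])
        rw [abs_le] at h2
        exact ⟨by linarith [h2.1], by linarith [h2.2]⟩
      -- measure bounds
      have hlow : ENNReal.ofReal (m * (2 * δ)) ≤ pA (Icc (x0 - δ) (x0 + δ)) := by
        rw [hpA]
        have := aux_lower hρAc hm.le (a := x0 - δ) (b := x0 + δ)
          (fun x hx => hminA ⟨by linarith [hx.1], by linarith [hx.2]⟩)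
        convert this using 2
        ring
      have hup : pC (Icc (y0 - ε * δ) (y0 + ε * δ)) ≤ ENNReal.ofReal (M * (2 * (ε * δ))) := by
        rw [hpC]
        have hεδ : ε * δ ≤ 1 := by nlinarith
        have := aux_upper (ρ := ρC) hM.le (a := y0 - ε * δ) (b := y0 + ε * δ)
          (fun x hx => hmaxC ⟨by linarith [hx.1], by linarith [hx.2]⟩)
        convert this using 2
        ring
      have hmid : pA (Icc (x0 - δ) (x0 + δ)) ≤ pC (Icc (y0 - ε * δ) (y0 + ε * δ)) := by
        have := (hmp b).measure_preimage (s := Icc (y0 - ε * δ) (y0 + ε * δ))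
          measurableSet_Icc.nullMeasurableSet
        calc pA (Icc (x0 - δ) (x0 + δ)) ≤ pA ((g b) ⁻¹' Icc (y0 - ε * δ) (y0 + ε * δ)) :=
              measure_mono hsub
          _ = pC (Icc (y0 - ε * δ) (y0 + ε * δ)) := this
      have hfin : ENNReal.ofReal (m * (2 * δ)) ≤ ENNReal.ofReal (M * (2 * (ε * δ))) :=
        hlow.trans (hmid.trans hup)
      rw [ENNReal.ofReal_le_ofReal_iff (by positivity)] at hfin
      nlinarith
    have := key (min 1 (m / (2 * M))) (lt_min one_pos (by positivity)) (min_le_left _ _)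
    have h2 : M * min 1 (m / (2 * M)) ≤ M * (m / (2 * M)) :=
      mul_le_mul_of_nonneg_left (min_le_right _ _) hM.le
    have h3 : M * (m / (2 * M)) = m / 2 := by field_simp
    linarith
  -- monotone dichotomy
  have hdich : ∀ b, StrictMono (g b) ∨ StrictAnti (g b) := by
    intro b
    have := hasDerivWithinAt_forall_lt_or_forall_gt_of_forall_ne (s := univ) convex_univ
      (f := g b) (f' := fun x => fderiv ℝ f (x, b) (1, 0))
      (fun x _ => (hgd b x).hasDerivWithinAt) (m := 0) (fun x _ => hne b x)
    rcases this with h | h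
    · right
      exact strictAnti_of_deriv_neg fun x => by rw [(hgd b x).deriv]; exact h x (mem_univ x)
    · left
      exact strictMono_of_deriv_pos fun x => by rw [(hgd b x).deriv]; exact h x (mem_univ x)
  -- key identities
  have hmonoId : ∀ b, StrictMono (g b) → ∀ a, pC (Iic (g b a)) = pA (Iic a) := by
    intro b hb a
    have hpre : (g b) ⁻¹' Iic (g b a) = Iic a := by
      ext x; simp only [mem_preimage, mem_Iic]; exact hb.le_iff_le
    rw [← (hmp b).measure_preimage measurableSet_Iic.nullMeasurableSet, hpre]
  have hantiId : ∀ b, StrictAnti (g b) → ∀ a, pC (Iic (g b a)) = pA (Ici a) := by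
    intro b hb a
    have hpre : (g b) ⁻¹' Iic (g b a) = Ici a := by
      ext x; simp only [mem_preimage, mem_Iic, mem_Ici]; exact hb.le_iff_ge
    rw [← (hmp b).measure_preimage measurableSet_Iic.nullMeasurableSet, hpre]
  -- Ici = Ioi in pA-measure
  have hIci : ∀ t : ℝ, pA (Ici t) = pA (Ioi t) := by
    intro t
    refine le_antisymm ?_ (measure_mono Ioi_subset_Ici_self)
    calc pA (Ici t) = pA (insert t (Ioi t)) := by rw [Ioi_insert]
      _ ≤ pA {t} + pA (Ioi t) := by rw [insert_eq]; exact measure_union_le _ _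
      _ = pA (Ioi t) := by rw [hatomA t, zero_add]
  -- choose a0 with pA (Iic a0) ≠ pA (Ici a0)
  have ha0 : ∃ a0 : ℝ, pA (Iic a0) ≠ pA (Ici a0) := by
    by_contra hcon
    push_neg at hcon
    have hsum : ∀ t : ℝ, pA (Iic t) + pA (Ioi t) = 1 := by
      intro t
      rw [← measure_univ (μ := pA), ← Iic_union_Ioi (a := t),
        measure_union (Iic_disjoint_Ioi le_rfl) measurableSet_Ioi]
    have hh : ∀ t : ℝ, pA (Iic t) + pA (Iic t) = 1 := by
      intro t
      nth_rewrite 2 [(hcon t).trans (hIci t)]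
      exact hsum t
    have htR : ∀ t : ℝ, (pA (Iic t)).toReal = 1 / 2 := by
      intro t
      have := congrArg ENNReal.toReal (hh t)
      rw [ENNReal.toReal_add (measure_ne_top _ _) (measure_ne_top _ _), ENNReal.toReal_one] at this
      linarith
    have hlt := hFA (show (0:ℝ) < 1 by norm_num)
    have hltR := (ENNReal.toReal_lt_toReal (measure_ne_top _ _) (measure_ne_top _ _)).2 hlt
    rw [htR 0, htR 1] at hltR
    exact lt_irrefl _ hltR
  obtain ⟨a0, ha0ne⟩ := ha0
  -- the mixed case is impossible
  have hmix : ∀ b b', StrictMono (g b) → StrictAnti (g b') → False := by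
    intro b b' hb hb'
    set t1 := g b a0 with ht1
    set t2 := g b' a0 with ht2
    have hFt1 : pC (Iic t1) = pA (Iic a0) := hmonoId b hb a0
    have hFt2 : pC (Iic t2) = pA (Ici a0) := hantiId b' hb' a0
    have ht12 : t1 ≠ t2 := by
      intro h; apply ha0ne; rw [← hFt1, h, hFt2]
    set c : ℝ → (Fin n → ℝ) := fun s => b + s • (b' - b) with hc_def
    have hcc : Continuous c := continuous_const.add (continuous_id.smul continuous_const)
    set φ : ℝ → ℝ := fun s => f (a0, c s) with hφ_def
    have hφc : Continuous φ := hf.continuous.comp (continuous_const.prodMk hcc)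
    have hφ0 : φ 0 = t1 := by simp [hφ_def, hc_def, ht1, hg_def]
    have hφ1 : φ 1 = t2 := by simp [hφ_def, hc_def, ht2, hg_def]
    set mid := (t1 + t2) / 2 with hmid_def
    have hmem : mid ∈ uIcc (φ 0) (φ 1) := by
      rw [hφ0, hφ1]
      rcases lt_or_gt_of_ne ht12 with h | h
      · exact mem_uIcc.2 (Or.inl ⟨by linarith, by linarith⟩)
      · exact mem_uIcc.2 (Or.inr ⟨by linarith, by linarith⟩)
    obtain ⟨s, _, hs⟩ := intermediate_value_uIcc (hφc.continuousOn (s := uIcc 0 1)) hmem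
    -- φ s = g (c s) a0
    have hval : pC (Iic mid) = pA (Iic a0) ∨ pC (Iic mid) = pA (Ici a0) := by
      rcases hdich (c s) with h | h
      · left; rw [← hs]; exact hmonoId (c s) h a0
      · right; rw [← hs]; exact hantiId (c s) h a0
    have hne12 : mid ≠ t1 ∧ mid ≠ t2 := by
      constructor <;> · intro h; apply ht12; rw [hmid_def] at h; linarith [h]
    rcases hval with h | h
    · exact hne12.1 (hFC.injective (by rw [h, ← hFt1]))
    · exact hne12.2 (hFC.injective (by rw [h, ← hFt2]))
  -- conclude
  intro a b b'
  rcases hdich b with hb | hb <;> rcases hdich b' with hb' | hb'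
  · exact hFC.injective ((hmonoId b hb a).trans (hmonoId b' hb' a).symm)
  · exact absurd (hmix b b' hb hb') id
  · exact absurd (hmix b' b hb' hb) id
  · exact hFC.injective ((hantiId b hb a).trans (hantiId b' hb' a).symm)
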